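/- Let Γ be a totally ordered abelian group, K a field, and D = K[x^{Γ_{≥0}}] the semigroup algebra on the nonnegative part of Γ. Then R(D) is a valuation ring of Frac(D) whose value group is Γ, with valuation ν(f/g) = deg(g) − deg(f). -/

import Mathlib

noncomputable def recip (D : Type*) [CommRing D] [IsDomain D] : Subring (FractionRing D) :=
  Subring.closure {x | ∃ d : D, d ≠ 0 ∧ x = (algebraMap D (FractionRing D) d)⁻¹}

instance semigroupAlgebraIsDomain (Γ : Type*) [AddCommGroup Γ] [LinearOrder Γ] [IsOrderedAddMonoid Γ]
    (K : Type*) [Field K] : IsDomain (AddMonoidAlgebra K {x : Γ // 0 ≤ x}) :=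
  NoZeroDivisors.to_isDomain _

/-- The degree (in `Γ`) of a nonzero element of the semigroup algebra `K[x^{Γ₊}]`:
the largest exponent with nonzero coefficient (junk value `0` for `f = 0`). -/
noncomputable def sdeg {Γ : Type*} [AddCommGroup Γ] [LinearOrder Γ] [IsOrderedAddMonoid Γ] {K : Type*} [Field K]
    (f : AddMonoidAlgebra K {x : Γ // 0 ≤ x}) : Γ :=
  ((f.coeff.support.max.unbotD 0 : {x : Γ // 0 ≤ x}) : Γ)

namespace S6

open AddMonoidAlgebra

variable {Γ : Type*} [AddCommGroup Γ] [LinearOrder Γ] [IsOrderedAddMonoid Γ] {K : Type*} [Field K]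

/-- The maximal exponent of `f`, as an element of `Γ≥0`. -/
noncomputable def maxExp (f : AddMonoidAlgebra K {x : Γ // 0 ≤ x}) : {x : Γ // 0 ≤ x} :=
  f.coeff.support.max.unbotD 0

variable {f g : AddMonoidAlgebra K {x : Γ // 0 ≤ x}}

lemma sdeg_def (f : AddMonoidAlgebra K {x : Γ // 0 ≤ x}) : sdeg f = ↑(maxExp f) := rfl

lemma maxExp_spec (hf : f ≠ 0) : f.coeff.support.max = ↑(maxExp f) := by
  obtain ⟨m, hm⟩ := Finset.max_of_nonempty (Finsupp.support_nonempty_iff.mpr (mt AddMonoidAlgebra.coeff_eq_zero.mp hf))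
  rw [maxExp, hm, WithBot.unbotD_coe]

lemma maxExp_mem (hf : f ≠ 0) : maxExp f ∈ f.coeff.support :=
  Finset.mem_of_max (maxExp_spec hf)

lemma le_maxExp {a} (ha : a ∈ f.coeff.support) : a ≤ maxExp f := by
  have hf : f ≠ 0 := fun h => by simp [h] at ha
  have h := Finset.le_max ha
  rw [maxExp_spec hf] at h
  exact WithBot.coe_le_coe.mp h

lemma maxExp_eq {b} (hb : b ∈ f.coeff.support) (hub : ∀ a ∈ f.coeff.support, a ≤ b) : maxExp f = b :=
  le_antisymm (hub _ (maxExp_mem (fun h => by simp [h] at hb))) (le_maxExp hb)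

lemma maxExp_single {a : {x : Γ // 0 ≤ x}} {c : K} (hc : c ≠ 0) :
    maxExp (single a c : AddMonoidAlgebra K {x : Γ // 0 ≤ x}) = a :=
  maxExp_eq (by simp [coeff_single, Finsupp.support_single_ne_zero _ hc])
    (by simp [coeff_single, Finsupp.support_single_ne_zero _ hc])

lemma uniqueAdd_max (hf : f ≠ 0) (hg : g ≠ 0) :
    UniqueAdd f.coeff.support g.coeff.support (maxExp f) (maxExp g) := by
  intro a b ha hb hab
  have h1 := le_maxExp ha
  have h2 := le_maxExp hb
  constructor
  · by_contra h
    exact (add_lt_add_of_lt_of_le (h1.lt_of_ne h) h2).ne hab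
  · by_contra h
    exact (add_lt_add_of_le_of_lt h1 (h2.lt_of_ne h)).ne hab

lemma coeff_mul_maxExp (hf : f ≠ 0) (hg : g ≠ 0) :
    (f * g).coeff (maxExp f + maxExp g) = f.coeff (maxExp f) * g.coeff (maxExp g) :=
  AddMonoidAlgebra.coeff_mul_add_of_uniqueAdd (uniqueAdd_max hf hg)

lemma maxExp_mul (hf : f ≠ 0) (hg : g ≠ 0) : maxExp (f * g) = maxExp f + maxExp g := by
  classical
  apply maxExp_eq
  · rw [Finsupp.mem_support_iff, coeff_mul_maxExp hf hg]
    exact mul_ne_zero (Finsupp.mem_support_iff.mp (maxExp_mem hf))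
      (Finsupp.mem_support_iff.mp (maxExp_mem hg))
  · intro a ha
    obtain ⟨b, hb, c, hc, rfl⟩ := Finset.mem_add.mp (AddMonoidAlgebra.support_coeff_mul_subset f g ha)
    exact add_le_add (le_maxExp hb) (le_maxExp hc)

lemma sdeg_nonneg (f : AddMonoidAlgebra K {x : Γ // 0 ≤ x}) : 0 ≤ sdeg f := (maxExp f).2

lemma sdeg_zero : sdeg (0 : AddMonoidAlgebra K {x : Γ // 0 ≤ x}) = 0 := by
  simp [sdeg]

lemma sdeg_mul (hf : f ≠ 0) (hg : g ≠ 0) : sdeg (f * g) = sdeg f + sdeg g := by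
  rw [sdeg_def, sdeg_def, sdeg_def, maxExp_mul hf hg]; rfl

lemma sdeg_single {a : {x : Γ // 0 ≤ x}} {c : K} (hc : c ≠ 0) :
    sdeg (single a c : AddMonoidAlgebra K {x : Γ // 0 ≤ x}) = ↑a := by
  rw [sdeg_def, maxExp_single hc]

lemma sdeg_one : sdeg (1 : AddMonoidAlgebra K {x : Γ // 0 ≤ x}) = 0 := by
  rw [AddMonoidAlgebra.one_def, sdeg_single one_ne_zero]; rfl

lemma sdeg_neg : sdeg (-f) = sdeg f := by
  rw [sdeg, sdeg, coeff_neg, Finsupp.support_neg]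

lemma mem_supp_le_sdeg {a} (ha : a ∈ f.coeff.support) : (↑a : Γ) ≤ sdeg f :=
  le_maxExp ha

lemma sdeg_le_of {β : Γ} (hβ : 0 ≤ β) (h : ∀ a ∈ f.coeff.support, (↑a : Γ) ≤ β) : sdeg f ≤ β := by
  by_cases hf : f = 0
  · rw [hf, sdeg_zero]; exact hβ
  · exact h _ (maxExp_mem hf)

lemma supp_mul_le {a} (ha : a ∈ (f * g).coeff.support) : (↑a : Γ) ≤ sdeg f + sdeg g := by
  classical
  obtain ⟨b, hb, c, hc, rfl⟩ := Finset.mem_add.mp (AddMonoidAlgebra.support_coeff_mul_subset f g ha)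
  exact add_le_add (mem_supp_le_sdeg hb) (mem_supp_le_sdeg hc)


section Frac

local notation "D'" => AddMonoidAlgebra K {x : Γ // 0 ≤ x}
local notation "F'" => FractionRing (AddMonoidAlgebra K {x : Γ // 0 ≤ x})
local notation "aM" => algebraMap (AddMonoidAlgebra K {x : Γ // 0 ≤ x})
  (FractionRing (AddMonoidAlgebra K {x : Γ // 0 ≤ x}))

lemma aM_ne {d : D'} (hd : d ≠ 0) : aM d ≠ 0 :=
  (map_ne_zero_iff _ (IsFractionRing.injective _ _)).mpr hd

lemma gen_mem {d : D'} (hd : d ≠ 0) : (aM d)⁻¹ ∈ recip D' :=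
  Subring.subset_closure ⟨d, hd, rfl⟩

lemma const_mem (c : K) : aM (single 0 c) ∈ recip D' := by
  by_cases hc : c = 0
  · rw [hc, single_eq_zero.mpr rfl, map_zero]
    exact zero_mem _
  · have h : aM (single 0 c⁻¹) * aM (single 0 c) = 1 := by
      rw [← map_mul, single_mul_single, add_zero, inv_mul_cancel₀ hc, ← one_def, map_one]
    rw [← inv_eq_of_mul_eq_one_right h]
    exact gen_mem (single_eq_zero.not.mpr (inv_ne_zero hc))

lemma coeff_single_mul_self {a : {x : Γ // 0 ≤ x}} {H : D'} :
    (single a (1 : K) * H).coeff a = H.coeff 0 := by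
  classical
  have hu : UniqueAdd (single a (1 : K)).coeff.support H.coeff.support a 0 := by
    intro x y hx hy hxy
    have hxa : x = a := Finset.mem_singleton.mp (Finsupp.support_single_subset hx)
    subst hxa
    exact ⟨rfl, by rwa [add_zero, add_eq_left] at hxy⟩
  have h := AddMonoidAlgebra.coeff_mul_add_of_uniqueAdd hu
  rw [add_zero] at h
  rw [h, coeff_single, Finsupp.single_eq_same, one_mul]

lemma coeff_single_mul_zero {d : {x : Γ // 0 ≤ x}} {H : D'} (hd : d ≠ 0) :
    (single d (1 : K) * H).coeff 0 = 0 := by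
  classical
  by_contra h
  have h0 : (0 : {x : Γ // 0 ≤ x}) ∈ (single d (1 : K) * H).coeff.support :=
    Finsupp.mem_support_iff.mpr h
  obtain ⟨b, hb, c, hc, hbc⟩ := Finset.mem_add.mp (AddMonoidAlgebra.support_coeff_mul_subset _ _ h0)
  have hbd : b = d := Finset.mem_singleton.mp (Finsupp.support_single_subset hb)
  subst hbd
  have hcoe : (b : Γ) + (c : Γ) = 0 := by exact_mod_cast congrArg Subtype.val hbc
  have hc2 : (0 : Γ) ≤ ↑c := c.2
  have hble : (b : Γ) ≤ 0 := by
    calc (b : Γ) ≤ (b : Γ) + (c : Γ) := le_add_of_nonneg_right hc2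
    _ = 0 := hcoe
  have : (b : Γ) = 0 := le_antisymm hble b.2
  exact hd (Subtype.ext this)

lemma tail_base (H : AddMonoidAlgebra K {x : Γ // 0 ≤ x}) (a₁ : {x : Γ // 0 ≤ x})
    (hH : H.coeff 0 ≠ 0) :
    aM (0 : AddMonoidAlgebra K {x : Γ // 0 ≤ x}) / aM (single a₁ 1 * H + 0) ∈ recip D' ∧
      aM (single a₁ (1 : K)) / aM (single a₁ 1 * H + 0) ∈ recip D' := by
  have hH0 : H ≠ 0 := fun h => hH (by rw [h]; rfl)
  constructor
  · rw [map_zero, zero_div]; exact zero_mem _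
  · have h1 : (single a₁ (1 : K) : AddMonoidAlgebra K {x : Γ // 0 ≤ x}) ≠ 0 :=
      single_eq_zero.not.mpr one_ne_zero
    rw [add_zero, map_mul, div_mul_cancel_left₀ (aM_ne h1)]
    exact gen_mem hH0

set_option maxHeartbeats 1000000 in
set_option synthInstance.maxHeartbeats 400000 in
lemma tail_aux (n : ℕ) : ∀ (t H : AddMonoidAlgebra K {x : Γ // 0 ≤ x})
    (a₁ : {x : Γ // 0 ≤ x}), t.coeff.support.card ≤ n → H.coeff 0 ≠ 0 →
    (∀ a ∈ t.coeff.support, a < a₁) →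
    aM t / aM (single a₁ 1 * H + t) ∈ recip D' ∧
      aM (single a₁ (1 : K)) / aM (single a₁ 1 * H + t) ∈ recip D' := by
  induction n with
  | zero =>
    intro t H a₁ hcard hH hlt
    have ht : t = 0 := AddMonoidAlgebra.coeff_eq_zero.mp (Finsupp.support_eq_empty.mp (Finset.card_eq_zero.mp (Nat.le_zero.mp hcard)))
    subst ht
    exact tail_base H a₁ hH
  | succ n ih =>
    intro t H a₁ hcard hH hlt
    by_cases ht : t = 0
    · subst ht; exact tail_base H a₁ hH
    · have hb0 : maxExp t ∈ t.coeff.support := maxExp_mem ht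
      have hc' : t.coeff (maxExp t) ≠ 0 := Finsupp.mem_support_iff.mp hb0
      have ha01 : maxExp t < a₁ := hlt _ hb0
      have hcoe01 : ((maxExp t : {x : Γ // 0 ≤ x}) : Γ) < (a₁ : Γ) := ha01
      set dd : {x : Γ // 0 ≤ x} := ⟨(a₁ : Γ) - ↑(maxExp t), sub_nonneg.mpr hcoe01.le⟩ with hdd
      have hddc : (dd : Γ) = (a₁ : Γ) - ↑(maxExp t) := by rw [hdd]
      have hd0 : dd ≠ 0 := by
        intro h
        have h2 : (dd : Γ) = 0 := congrArg Subtype.val h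
        rw [hddc] at h2
        exact (sub_ne_zero.mpr (ne_of_gt hcoe01)) h2
      have hadd : maxExp t + dd = a₁ := by
        apply Subtype.ext
        show ((maxExp t : {x : Γ // 0 ≤ x}) : Γ) + (dd : Γ) = (a₁ : Γ)
        rw [hddc, add_sub_cancel]
      have herase : t - single (maxExp t) (t.coeff (maxExp t)) = AddMonoidAlgebra.erase (maxExp t) t :=
        AddMonoidAlgebra.ext (by rw [coeff_sub, coeff_erase, coeff_single, Finsupp.erase_eq_sub_single])
      have hcard₂ : (t - single (maxExp t) (t.coeff (maxExp t))).coeff.support.card ≤ n := by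
        rw [herase, coeff_erase, Finsupp.support_erase]
        have := Finset.card_erase_of_mem hb0
        omega
      have hH'0 : ((single dd 1 * H + single 0 (t.coeff (maxExp t)) :
          AddMonoidAlgebra K {x : Γ // 0 ≤ x})).coeff 0 = t.coeff (maxExp t) := by
        rw [coeff_add, Finsupp.add_apply, coeff_single_mul_zero hd0, coeff_single, Finsupp.single_eq_same, zero_add]
      have hlt₂ : ∀ a ∈ (t - single (maxExp t) (t.coeff (maxExp t))).coeff.support, a < maxExp t := by
        intro a ha
        rw [herase, coeff_erase, Finsupp.support_erase, Finset.mem_erase] at ha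
        exact (le_maxExp ha.2).lt_of_ne ha.1
      obtain ⟨ih1, ih2⟩ := ih (t - single (maxExp t) (t.coeff (maxExp t)))
        (single dd 1 * H + single 0 (t.coeff (maxExp t))) (maxExp t) hcard₂
        (by rw [hH'0]; exact hc') hlt₂
      have hgeq : single (maxExp t) (1 : K) * (single dd 1 * H + single 0 (t.coeff (maxExp t)))
          + (t - single (maxExp t) (t.coeff (maxExp t))) = single a₁ 1 * H + t := by
        simp only [mul_add, ← mul_assoc, single_mul_single, one_mul, mul_one, add_zero]
        rw [hadd, add_assoc, add_sub_cancel]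
      rw [hgeq] at ih1 ih2
      have hta₁ : t.coeff a₁ = 0 := by
        by_contra h
        exact lt_irrefl a₁ (hlt _ (Finsupp.mem_support_iff.mpr h))
      have hgco : (single a₁ (1 : K) * H + t).coeff a₁ = H.coeff 0 := by
        rw [coeff_add, Finsupp.add_apply, coeff_single_mul_self, hta₁, add_zero]
      have hgne : (single a₁ (1 : K) * H + t) ≠ 0 := fun h0 => hH (by rw [← hgco, h0]; rfl)
      have hGne := aM_ne hgne
      have e1 : aM (single 0 (t.coeff (maxExp t))) * (aM (single (maxExp t) (1 : K))
            / aM (single a₁ 1 * H + t))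
            + aM (t - single (maxExp t) (t.coeff (maxExp t))) / aM (single a₁ 1 * H + t)
          = aM t / aM (single a₁ 1 * H + t) := by
        rw [← mul_div_assoc, ← map_mul, single_mul_single, zero_add, mul_one, ← add_div,
          ← map_add, add_sub_cancel]
      have m1 : aM t / aM (single a₁ 1 * H + t) ∈ recip D' := by
        rw [← e1]
        exact add_mem (mul_mem (const_mem _) ih2) ih1
      refine ⟨m1, ?_⟩
      have hH0 : H ≠ 0 := fun h => hH (by rw [h]; rfl)
      have h1 : (1 : F') - aM t / aM (single a₁ 1 * H + t)
          = aM (single a₁ 1) * aM H / aM (single a₁ 1 * H + t) := by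
        rw [eq_div_iff hGne, sub_mul, div_mul_cancel₀ _ hGne, one_mul, ← map_mul, ← map_sub]
        exact congrArg _ (add_sub_cancel_right (single a₁ 1 * H) t)
      have e2 : aM (single a₁ (1 : K)) / aM (single a₁ 1 * H + t)
          = ((1 : F') - aM t / aM (single a₁ 1 * H + t)) * (aM H)⁻¹ := by
        rw [h1, div_mul_eq_mul_div, mul_inv_cancel_right₀ (aM_ne hH0)]
      rw [e2]
      exact mul_mem (sub_mem (one_mem _) m1) (gen_mem hH0)

set_option maxHeartbeats 1000000 in
set_option synthInstance.maxHeartbeats 400000 in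
lemma top_mem {g : AddMonoidAlgebra K {x : Γ // 0 ≤ x}} (hg : g ≠ 0) :
    aM (single (maxExp g) (1 : K)) / aM g ∈ recip D' := by
  have h0 : (single 0 (g.coeff (maxExp g)) : AddMonoidAlgebra K {x : Γ // 0 ≤ x}).coeff 0 = g.coeff (maxExp g) :=
    Finsupp.single_eq_same
  have hlt : ∀ a ∈ (g - single (maxExp g) (g.coeff (maxExp g))).coeff.support, a < maxExp g := by
    intro a ha
    rw [coeff_sub, coeff_single, ← Finsupp.erase_eq_sub_single, Finsupp.support_erase, Finset.mem_erase] at ha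
    exact (le_maxExp ha.2).lt_of_ne ha.1
  have h := (tail_aux (g - single (maxExp g) (g.coeff (maxExp g))).coeff.support.card
      (g - single (maxExp g) (g.coeff (maxExp g))) (single 0 (g.coeff (maxExp g))) (maxExp g)
      le_rfl (by rw [h0]; exact Finsupp.mem_support_iff.mp (maxExp_mem hg)) hlt).2
  have hgeq : single (maxExp g) (1 : K) * single 0 (g.coeff (maxExp g))
      + (g - single (maxExp g) (g.coeff (maxExp g))) = g := by
    rw [single_mul_single, add_zero, one_mul, add_sub_cancel]
  rwa [hgeq] at h

set_option maxHeartbeats 1000000 in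
set_option synthInstance.maxHeartbeats 400000 in
lemma main_mem {f g : AddMonoidAlgebra K {x : Γ // 0 ≤ x}} (hg : g ≠ 0)
    (hle : ∀ a ∈ f.coeff.support, (a : Γ) ≤ sdeg g) : aM f / aM g ∈ recip D' := by
  have hsum : (∑ a ∈ f.coeff.support, single a (f.coeff a) : AddMonoidAlgebra K {x : Γ // 0 ≤ x}) = f :=
    sum_coeff_single f
  rw [← hsum, map_sum, Finset.sum_div]
  refine Subring.sum_mem _ fun a ha => ?_
  have haG : (a : Γ) ≤ sdeg g := hle a ha
  set d2 : {x : Γ // 0 ≤ x} := ⟨sdeg g - a, sub_nonneg.mpr haG⟩ with hd2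
  have hd2c : (d2 : Γ) = sdeg g - a := by rw [hd2]
  have hsplit : single a (1 : K) * single d2 1 = single (maxExp g) (1 : K) := by
    rw [single_mul_single, mul_one]
    congr 1
    apply Subtype.ext
    show (a : Γ) + (d2 : Γ) = ((maxExp g : {x : Γ // 0 ≤ x}) : Γ)
    rw [hd2c, ← sdeg_def, add_sub_cancel]
  have hd2ne : (single d2 (1 : K) : AddMonoidAlgebra K {x : Γ // 0 ≤ x}) ≠ 0 :=
    single_eq_zero.not.mpr one_ne_zero
  have key : aM (single a (f.coeff a)) = aM (single 0 (f.coeff a))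
      * (aM (single (maxExp g) (1 : K)) * (aM (single d2 (1 : K)))⁻¹) := by
    rw [← hsplit, map_mul, mul_inv_cancel_right₀ (aM_ne hd2ne), ← map_mul, single_mul_single,
      zero_add, mul_one]
  have harr : aM (single 0 (f.coeff a)) * (aM (single (maxExp g) (1 : K)) * (aM (single d2 (1 : K)))⁻¹)
        / aM g
      = aM (single 0 (f.coeff a)) * (aM (single (maxExp g) (1 : K)) / aM g
        * (aM (single d2 (1 : K)))⁻¹) := by
    ring
  rw [key, harr]
  exact mul_mem (const_mem _) (mul_mem (top_mem hg) (gen_mem hd2ne))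

set_option maxHeartbeats 1000000 in
set_option synthInstance.maxHeartbeats 400000 in
lemma recip_sub {x : F'} (hx : x ∈ recip D') :
    ∃ f g : AddMonoidAlgebra K {x : Γ // 0 ≤ x},
      g ≠ 0 ∧ x = aM f / aM g ∧ sdeg f ≤ sdeg g := by
  refine Subring.closure_induction ?_ ?_ ?_ ?_ ?_ ?_ hx
  · rintro x ⟨d, hd, rfl⟩
    exact ⟨1, d, hd, by rw [map_one, one_div], by rw [sdeg_one]; exact sdeg_nonneg d⟩
  · exact ⟨0, 1, one_ne_zero, by rw [map_zero, zero_div], by rw [sdeg_zero]; exact sdeg_nonneg 1⟩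
  · exact ⟨1, 1, one_ne_zero, by rw [map_one, div_one], le_rfl⟩
  · rintro x y _ _ ⟨f, g, hg, hxe, hled⟩ ⟨f', g', hg', hye, hled'⟩
    refine ⟨f * g' + g * f', g * g', mul_ne_zero hg hg', ?_, ?_⟩
    · rw [hxe, hye, div_add_div _ _ (aM_ne hg) (aM_ne hg'), ← map_mul, ← map_mul, ← map_mul,
        ← map_add]
    · rw [sdeg_mul hg hg']
      refine sdeg_le_of (add_nonneg (sdeg_nonneg g) (sdeg_nonneg g')) fun a ha => ?_
      rcases Finset.mem_union.mp (Finsupp.support_add (g₁ := (f * g').coeff) (g₂ := (g * f').coeff) ha) with h | h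
      · exact (supp_mul_le h).trans (add_le_add_left hled _)
      · exact (supp_mul_le h).trans (add_le_add_right hled' _)
  · rintro x _ ⟨f, g, hg, hxe, hled⟩
    exact ⟨-f, g, hg, by rw [hxe, map_neg, neg_div], by rw [sdeg_neg]; exact hled⟩
  · rintro x y _ _ ⟨f, g, hg, hxe, hled⟩ ⟨f', g', hg', hye, hled'⟩
    refine ⟨f * f', g * g', mul_ne_zero hg hg', ?_, ?_⟩
    · rw [hxe, hye, div_mul_div_comm, ← map_mul, ← map_mul]
    · rw [sdeg_mul hg hg']
      refine sdeg_le_of (add_nonneg (sdeg_nonneg g) (sdeg_nonneg g')) fun a ha => ?_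
      exact (supp_mul_le ha).trans (add_le_add hled hled')

lemma wd {f g f' g' : AddMonoidAlgebra K {x : Γ // 0 ≤ x}} (hf : f ≠ 0) (hg : g ≠ 0)
    (hf' : f' ≠ 0) (hg' : g' ≠ 0) (h : aM f / aM g = aM f' / aM g') :
    sdeg g - sdeg f = sdeg g' - sdeg f' := by
  rw [div_eq_div_iff (aM_ne hg) (aM_ne hg')] at h
  have h2 : f * g' = f' * g := IsFractionRing.injective (AddMonoidAlgebra K {x : Γ // 0 ≤ x})
    (FractionRing (AddMonoidAlgebra K {x : Γ // 0 ≤ x})) (by rwa [map_mul, map_mul])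
  have h3 := congrArg sdeg h2
  rw [sdeg_mul hf hg', sdeg_mul hf' hg] at h3
  rw [sub_eq_sub_iff_add_eq_add, add_comm (sdeg g), add_comm (sdeg g')]
  exact h3.symm

lemma rep {x : F'} (hx : x ≠ 0) :
    ∃ f g : AddMonoidAlgebra K {x : Γ // 0 ≤ x}, f ≠ 0 ∧ g ≠ 0 ∧ x = aM f / aM g := by
  obtain ⟨f, g, hg, he⟩ :=
    IsFractionRing.div_surjective (A := AddMonoidAlgebra K {x : Γ // 0 ≤ x}) x
  have hgne : g ≠ 0 := nonZeroDivisors.ne_zero hg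
  have hfne : f ≠ 0 := by
    rintro rfl
    rw [map_zero, zero_div] at he
    exact hx he.symm
  exact ⟨f, g, hfne, hgne, he.symm⟩

open Classical in
/-- The raw valuation `ν(f/g) = sdeg g - sdeg f`. -/
noncomputable def nuraw (x : FractionRing (AddMonoidAlgebra K {x : Γ // 0 ≤ x})) : Γ :=
  if h : ∃ p : (AddMonoidAlgebra K {x : Γ // 0 ≤ x}) × (AddMonoidAlgebra K {x : Γ // 0 ≤ x}),
      p.1 ≠ 0 ∧ p.2 ≠ 0 ∧ x = aM p.1 / aM p.2
  then sdeg h.choose.2 - sdeg h.choose.1 else 0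

lemma nuraw_eq {x : F'} {f g : AddMonoidAlgebra K {x : Γ // 0 ≤ x}} (hf : f ≠ 0) (hg : g ≠ 0)
    (hx : x = aM f / aM g) : nuraw x = sdeg g - sdeg f := by
  have hP : ∃ p : (AddMonoidAlgebra K {x : Γ // 0 ≤ x}) × (AddMonoidAlgebra K {x : Γ // 0 ≤ x}),
      p.1 ≠ 0 ∧ p.2 ≠ 0 ∧ x = aM p.1 / aM p.2 := ⟨(f, g), hf, hg, hx⟩
  rw [nuraw, dif_pos hP]
  obtain ⟨h1, h2, h3⟩ := hP.choose_spec
  exact wd h1 h2 hf hg (by rw [← h3, ← hx])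

end Frac

end S6

set_option maxHeartbeats 1000000 in
set_option synthInstance.maxHeartbeats 400000 in
/-- For `D = K[x^{Γ₊}]`, `R(D)` is a valuation ring of `Frac D` with
value group `Γ`, the valuation being `ν(f/g) = deg g − deg f`.  Concretely: there is a
surjective group homomorphism `ν : Frac(D)ˣ →* Γ` (written multiplicatively) such that a
unit lies in `R(D)` iff its value is `≥ 0`, and `ν(f/g) = deg g − deg f` for nonzero
`f, g ∈ D`; moreover for every nonzero `x`, `x ∈ R(D)` or `x⁻¹ ∈ R(D)`. -/
theorem stmt_6 (Γ : Type*) [AddCommGroup Γ] [LinearOrder Γ] [IsOrderedAddMonoid Γ] (K : Type*) [Field K] :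
    letI D := AddMonoidAlgebra K {x : Γ // 0 ≤ x}
    letI F := FractionRing D
    (∀ x : F, x ≠ 0 → x ∈ recip D ∨ x⁻¹ ∈ recip D) ∧
    ∃ ν : Fˣ →* Multiplicative Γ, Function.Surjective ν ∧
      (∀ u : Fˣ, (u : F) ∈ recip D ↔ 0 ≤ Multiplicative.toAdd (ν u)) ∧
      (∀ (u : Fˣ) (f g : D), f ≠ 0 → g ≠ 0 →
        (u : F) = algebraMap D F f / algebraMap D F g →
        Multiplicative.toAdd (ν u) = sdeg g - sdeg f) := by
  refine ⟨?_, ?_⟩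
  · intro x hx
    obtain ⟨f, g, hf, hg, hxe⟩ := S6.rep hx
    rcases le_total (sdeg f) (sdeg g) with hle | hle
    · left
      rw [hxe]
      exact S6.main_mem hg fun a ha => (S6.mem_supp_le_sdeg ha).trans hle
    · right
      have hxi : x⁻¹ = algebraMap _ _ g / algebraMap _ _ f := by rw [hxe, inv_div]
      rw [hxi]
      exact S6.main_mem hf fun a ha => (S6.mem_supp_le_sdeg ha).trans hle
  · refine ⟨MonoidHom.mk' (fun u => Multiplicative.ofAdd
        (S6.nuraw (u : FractionRing (AddMonoidAlgebra K {x : Γ // 0 ≤ x})))) ?_, ?_, ?_, ?_⟩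
    · intro u v
      obtain ⟨f, g, hf, hg, hu⟩ := S6.rep u.ne_zero
      obtain ⟨f', g', hf', hg', hv⟩ := S6.rep v.ne_zero
      have huv : ((u * v : (FractionRing (AddMonoidAlgebra K {x : Γ // 0 ≤ x}))ˣ)
          : FractionRing (AddMonoidAlgebra K {x : Γ // 0 ≤ x}))
          = algebraMap _ _ (f * f') / algebraMap _ _ (g * g') := by
        rw [Units.val_mul, hu, hv, div_mul_div_comm, map_mul, map_mul]
      have hkey : S6.nuraw ((u * v : (FractionRing (AddMonoidAlgebra K {x : Γ // 0 ≤ x}))ˣ)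
            : FractionRing (AddMonoidAlgebra K {x : Γ // 0 ≤ x}))
          = S6.nuraw (u : FractionRing (AddMonoidAlgebra K {x : Γ // 0 ≤ x}))
            + S6.nuraw (v : FractionRing (AddMonoidAlgebra K {x : Γ // 0 ≤ x})) := by
        rw [S6.nuraw_eq (mul_ne_zero hf hf') (mul_ne_zero hg hg') huv,
          S6.nuraw_eq hf hg hu, S6.nuraw_eq hf' hg' hv,
          S6.sdeg_mul hf hf', S6.sdeg_mul hg hg']
        abel
      beta_reduce
      rw [hkey, ofAdd_add]
    · intro m
      have hfne : (AddMonoidAlgebra.single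
          (⟨(Multiplicative.toAdd m)⁻, negPart_nonneg _⟩ : {x : Γ // 0 ≤ x}) (1 : K)) ≠ 0 :=
        AddMonoidAlgebra.single_eq_zero.not.mpr one_ne_zero
      have hgne : (AddMonoidAlgebra.single
          (⟨(Multiplicative.toAdd m)⁺, posPart_nonneg _⟩ : {x : Γ // 0 ≤ x}) (1 : K)) ≠ 0 :=
        AddMonoidAlgebra.single_eq_zero.not.mpr one_ne_zero
      have hxne : algebraMap _ (FractionRing (AddMonoidAlgebra K {x : Γ // 0 ≤ x}))
            (AddMonoidAlgebra.single
              (⟨(Multiplicative.toAdd m)⁻, negPart_nonneg _⟩ : {x : Γ // 0 ≤ x}) (1 : K))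
          / algebraMap _ _ (AddMonoidAlgebra.single
              (⟨(Multiplicative.toAdd m)⁺, posPart_nonneg _⟩ : {x : Γ // 0 ≤ x}) (1 : K)) ≠ 0 :=
        div_ne_zero (S6.aM_ne hfne) (S6.aM_ne hgne)
      refine ⟨Units.mk0 _ hxne, ?_⟩
      show Multiplicative.ofAdd (S6.nuraw _) = m
      rw [Units.val_mk0, S6.nuraw_eq hfne hgne rfl, S6.sdeg_single one_ne_zero,
        S6.sdeg_single one_ne_zero]
      show Multiplicative.ofAdd ((Multiplicative.toAdd m)⁺ - (Multiplicative.toAdd m)⁻) = m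
      rw [posPart_sub_negPart, ofAdd_toAdd]
    · intro u
      show (u : FractionRing (AddMonoidAlgebra K {x : Γ // 0 ≤ x})) ∈ _ ↔
        0 ≤ Multiplicative.toAdd (Multiplicative.ofAdd
          (S6.nuraw (u : FractionRing (AddMonoidAlgebra K {x : Γ // 0 ≤ x}))))
      rw [toAdd_ofAdd]
      constructor
      · intro hu
        obtain ⟨f, g, hg, hxe, hled⟩ := S6.recip_sub hu
        have hf : f ≠ 0 := by
          rintro rfl
          rw [map_zero, zero_div] at hxe
          exact u.ne_zero hxe
        rw [S6.nuraw_eq hf hg hxe]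
        exact sub_nonneg.mpr hled
      · intro h
        obtain ⟨f, g, hf, hg, hxe⟩ := S6.rep u.ne_zero
        rw [S6.nuraw_eq hf hg hxe] at h
        rw [hxe]
        exact S6.main_mem hg fun a ha => (S6.mem_supp_le_sdeg ha).trans (sub_nonneg.mp h)
    · intro u f g hf hg hxe
      show Multiplicative.toAdd (Multiplicative.ofAdd
        (S6.nuraw (u : FractionRing (AddMonoidAlgebra K {x : Γ // 0 ≤ x})))) = _
      rw [toAdd_ofAdd]
      exact S6.nuraw_eq hf hg hxe
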